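/- Let A be an integer matrix whose kernel lattice L is positive, and let u ∈ M(A) (the universal Markov basis). If u^+ and u^- are vertices of two disjoint Markov polytopes P_1 and P_2 (the convex hulls of the connected components of G_u containing u^+ and u^- respectively), then there exists a linear functional c ∈ R^n, with c·v = 0 for all v in the segment [u^+, u^-] and c·v > 0 for all other points v of the polytope P[u] = conv(F_u); hence [u^+, u^-] is an edge of P[u]. -/

import Mathlib

open Matrix

/-- Componentwise positive part of an integer vector. -/
def vpos {n : ℕ} (u : Fin n → ℤ) : Fin n → ℤ := fun i => max (u i) 0
/-- Componentwise negative part of an integer vector. -/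
def vneg {n : ℕ} (u : Fin n → ℤ) : Fin n → ℤ := fun i => max (-u i) 0

/-- Real realization of an integer vector. -/
def toR {n : ℕ} (u : Fin n → ℤ) : Fin n → ℝ := fun i => (u i : ℝ)

/-- The fiber of `u` with respect to the kernel lattice of `A`. -/
def fiber {m n : ℕ} (A : Matrix (Fin m) (Fin n) ℤ) (u : Fin n → ℤ) : Set (Fin n → ℤ) :=
  {t | (∀ i, 0 ≤ t i) ∧ A.mulVec (vpos u - t) = 0}

/-- The edge relation of the fiber graph `G_u`. -/
def fiberEdge {m n : ℕ} (A : Matrix (Fin m) (Fin n) ℤ) (u : Fin n → ℤ)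
    (w₁ w₂ : Fin n → ℤ) : Prop :=
  w₁ ∈ fiber A u ∧ w₂ ∈ fiber A u ∧ ∃ i, w₁ i ≠ 0 ∧ w₂ i ≠ 0

/-- Connectedness in the fiber graph `G_u`. -/
def sameComponent {m n : ℕ} (A : Matrix (Fin m) (Fin n) ℤ) (u : Fin n → ℤ)
    (w₁ w₂ : Fin n → ℤ) : Prop :=
  Relation.ReflTransGen (fiberEdge A u) w₁ w₂

/-- `x` is a vertex of the polytope spanned by the (real images of the) set `S`. -/
def IsVertexOf {n : ℕ} (S : Set (Fin n → ℝ)) (x : Fin n → ℝ) : Prop :=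
  x ∈ S ∧ ∃ c : Fin n → ℝ, ∀ y ∈ convexHull ℝ S, y ≠ x → c ⬝ᵥ x < c ⬝ᵥ y

lemma vpos_sub_vneg {n : ℕ} (u : Fin n → ℤ) : vpos u - vneg u = u := by
  funext i
  simp only [Pi.sub_apply, vpos, vneg]
  omega

lemma toR_injective {n : ℕ} : Function.Injective (toR (n := n)) := by
  intro a b h
  funext i
  have := congrFun h i
  simpa [toR] using this

lemma toR_dot {n : ℕ} (a b : Fin n → ℤ) : toR a ⬝ᵥ toR b = ((a ⬝ᵥ b : ℤ) : ℝ) := by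
  simp only [dotProduct, toR]
  push_cast
  rfl

lemma fiber_finite {m n : ℕ} (A : Matrix (Fin m) (Fin n) ℤ)
    (hpos : ∀ x : Fin n → ℤ, A.mulVec x = 0 → (∀ i, 0 ≤ x i) → x = 0)
    (u : Fin n → ℤ) : (fiber A u).Finite := by
  by_contra hinf
  have hinf : (fiber A u).Infinite := hinf
  set f := hinf.natEmbedding with hf
  set F : ℕ → (Fin n → ℕ) := fun k i => ((f k : Fin n → ℤ) i).toNat with hF
  have hpwo : (Set.univ : Set (Fin n → ℕ)).IsPWO := by
    have h : ∀ i : Fin n, IsWellOrder ℕ (· < ·) := fun _ => inferInstance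
    simpa using Set.IsPWO.pi (s := fun _ : Fin n => (Set.univ : Set ℕ)) (fun _ => Set.isPWO_of_wellQuasiOrderedLE _)
  obtain ⟨k, l, hkl, hle⟩ := Set.PartiallyWellOrderedOn.exists_lt hpwo (f := F) (fun _ => Set.mem_univ _)
  have hxle : ∀ i, (f k : Fin n → ℤ) i ≤ (f l : Fin n → ℤ) i := by
    intro i
    have h1 := hle i
    have h2 := (f k).2.1 i
    have h3 := (f l).2.1 i
    simp only [hF, F] at h1
    omega
  have hker : A.mulVec ((f l : Fin n → ℤ) - (f k : Fin n → ℤ)) = 0 := by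
    have h1 := (f k).2.2
    have h2 := (f l).2.2
    rw [Matrix.mulVec_sub] at h1 h2 ⊢
    rw [sub_eq_zero] at h1 h2 ⊢
    rw [← h1, ← h2]
  have hz := hpos _ hker (fun i => by have := hxle i; simp only [Pi.sub_apply]; omega)
  have : (f k : Fin n → ℤ) = (f l : Fin n → ℤ) := by
    funext i
    have := congrFun hz i
    simp only [Pi.sub_apply, Pi.zero_apply] at this
    omega
  have : f k = f l := Subtype.ext this
  exact absurd (f.injective this) (by omega)

/-- Let `L = ker_ℤ(A)` be positive and `u` in the universal Markov basis (`u⁺`, `u⁻` in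
different components of `G_u`).  If `u⁺`, `u⁻` are vertices of the two disjoint Markov
polytopes `P₁`, `P₂` given by their components, then there is a linear functional `c`
vanishing on the segment `[u⁺,u⁻]` and strictly positive on all other points of
`P[u] = conv(F_u)`; hence `[u⁺,u⁻]` is an edge of `P[u]`. -/
theorem edge_of_vertices_of_disjoint_markov_polytopes {m n : ℕ}
    (A : Matrix (Fin m) (Fin n) ℤ)
    (hpos : ∀ x : Fin n → ℤ, A.mulVec x = 0 → (∀ i, 0 ≤ x i) → x = 0)
    (u : Fin n → ℤ) (hu : A.mulVec u = 0)
    (huM : ¬ sameComponent A u (vpos u) (vneg u))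
    (P₁ P₂ : Set (Fin n → ℝ))
    (hP₁ : P₁ = convexHull ℝ (toR '' {t | sameComponent A u (vpos u) t}))
    (hP₂ : P₂ = convexHull ℝ (toR '' {t | sameComponent A u (vneg u) t}))
    (hdisj : Disjoint P₁ P₂)
    (hv₁ : IsVertexOf (toR '' {t | sameComponent A u (vpos u) t}) (toR (vpos u)))
    (hv₂ : IsVertexOf (toR '' {t | sameComponent A u (vneg u) t}) (toR (vneg u))) :
    ∃ c : Fin n → ℝ,
      (∀ v ∈ segment ℝ (toR (vpos u)) (toR (vneg u)), c ⬝ᵥ v = 0) ∧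
      (∀ v ∈ convexHull ℝ (toR '' fiber A u),
        v ∉ segment ℝ (toR (vpos u)) (toR (vneg u)) → 0 < c ⬝ᵥ v) := by
  obtain ⟨-, c₁, hc₁⟩ := hv₁
  obtain ⟨-, c₂, hc₂⟩ := hv₂
  clear hdisj hP₁ hP₂
  set P := vpos u with hPdef
  set N := vneg u with hNdef
  have hPnn : ∀ i, 0 ≤ P i := fun i => le_max_right _ _
  have hNnn : ∀ i, 0 ≤ N i := fun i => le_max_right _ _
  have hPN : ∀ i, P i = 0 ∨ N i = 0 := by
    intro i
    simp only [hPdef, hNdef, vpos, vneg]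
    omega
  have hPf : P ∈ fiber A u := ⟨hPnn, by simp [hPdef, sub_self]⟩
  have hNf : N ∈ fiber A u := by
    refine ⟨hNnn, ?_⟩
    show A.mulVec (P - N) = 0
    rw [hPdef, hNdef, vpos_sub_vneg]
    exact hu
  have hAt : ∀ {t}, t ∈ fiber A u → A.mulVec t = A.mulVec P := by
    intro t ht
    have h2 := ht.2
    rw [← hPdef, Matrix.mulVec_sub, sub_eq_zero] at h2
    exact h2.symm
  have hAP : A.mulVec P ≠ 0 := by
    intro h
    have hP0 : P = 0 := hpos P h hPnn
    have hN0 : N = 0 := hpos N ((hAt hNf).trans h) hNnn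
    exact huM (by rw [hP0.trans hN0.symm]; exact Relation.ReflTransGen.refl)
  have h0f : (0 : Fin n → ℤ) ∉ fiber A u := by
    intro h
    exact hAP ((hAt h).symm.trans (Matrix.mulVec_zero A))
  have hmem : ∀ {w t}, sameComponent A u w t → w ∈ fiber A u → t ∈ fiber A u := by
    intro w t h hw
    induction h with
    | refl => exact hw
    | tail _ e _ => exact e.2.1
  have hsymm : ∀ {w t}, sameComponent A u w t → sameComponent A u t w := by
    intro w t h
    refine @Std.Symm.symm _ _ (@Relation.ReflTransGen.stdSymm _ _ ⟨?_⟩) _ _ h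
    rintro a b' ⟨ha, hb, i, h1, h2⟩
    exact ⟨hb, ha, i, h2, h1⟩
  have hTsupp : ∀ {t}, sameComponent A u P t → ∀ i, N i ≠ 0 → t i = 0 := by
    intro t ht i hNi
    by_contra hti
    exact huM (ht.tail ⟨hmem ht hPf, hNf, i, hti, hNi⟩)
  have hSsupp : ∀ {t}, sameComponent A u N t → ∀ i, P i ≠ 0 → t i = 0 := by
    intro t ht i hPi
    by_contra hti
    exact huM (hsymm (ht.tail ⟨hmem ht hNf, hPf, i, hti, hPi⟩))
  have hOsuppP : ∀ {t}, t ∈ fiber A u → ¬ sameComponent A u P t → ∀ i, P i ≠ 0 → t i = 0 := by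
    intro t htf hns i hPi
    by_contra hti
    exact hns (Relation.ReflTransGen.single ⟨hPf, htf, i, hPi, hti⟩)
  have hOsuppN : ∀ {t}, t ∈ fiber A u → ¬ sameComponent A u N t → ∀ i, N i ≠ 0 → t i = 0 := by
    intro t htf hns i hNi
    by_contra hti
    exact hns (Relation.ReflTransGen.single ⟨hNf, htf, i, hNi, hti⟩)
  -- the row-space vector r and the constant κ
  set r : Fin n → ℤ := (A.mulVec P) ᵥ* A with hrdef
  set κz : ℤ := (A.mulVec P) ⬝ᵥ (A.mulVec P) with hκdef
  have hrdot : ∀ {t}, t ∈ fiber A u → r ⬝ᵥ t = κz := by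
    intro t ht
    rw [hrdef, ← Matrix.dotProduct_mulVec, hAt ht, hκdef]
  have hκpos : (0:ℝ) < (κz : ℝ) := by
    have h1 : κz ≠ 0 := fun h => hAP (dotProduct_self_eq_zero.mp h)
    have h2 : 0 ≤ κz := Finset.sum_nonneg fun i _ => mul_self_nonneg _
    exact_mod_cast lt_of_le_of_ne h2 (Ne.symm h1)
  have hκne : ((κz : ℝ)) ≠ 0 := ne_of_gt hκpos
  set α : ℝ := c₁ ⬝ᵥ toR P with hαdef
  set β : ℝ := c₂ ⬝ᵥ toR N with hβdef
  set a : Fin n → ℝ := fun i => c₁ i - (α / κz) * (r i : ℝ) with hadef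
  set b : Fin n → ℝ := fun i => c₂ i - (β / κz) * (r i : ℝ) with hbdef
  set d : Fin n → ℝ := fun i => if P i ≠ 0 then a i else if N i ≠ 0 then b i else 0 with hddef
  have hfin : (fiber A u).Finite := fiber_finite A hpos u
  obtain ⟨B, hB⟩ := (hfin.image (fun t => d ⬝ᵥ toR t)).bddBelow
  have hBd : ∀ t ∈ fiber A u, B ≤ d ⬝ᵥ toR t := fun t ht => hB ⟨t, ht, rfl⟩
  set M : ℝ := max 1 (1 - B) with hMdef
  have hM1 : (1:ℝ) ≤ M := le_max_left _ _
  set c : Fin n → ℝ := fun i => if P i ≠ 0 then a i else if N i ≠ 0 then b i else M with hcdef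
  -- formula on the positive side
  have fA : ∀ t ∈ fiber A u, (∀ i, t i ≠ 0 → P i ≠ 0) →
      c ⬝ᵥ toR t = c₁ ⬝ᵥ toR t - α := by
    intro t ht hsupp
    have h1 : c ⬝ᵥ toR t = (c₁ - (α / κz) • toR r) ⬝ᵥ toR t := by
      refine Finset.sum_congr rfl fun i _ => ?_
      by_cases hti : t i = 0
      · simp [toR, hti]
      · have hPi := hsupp i hti
        simp only [hcdef, if_pos hPi, hadef, Pi.sub_apply, Pi.smul_apply, smul_eq_mul, toR]
    rw [h1, sub_dotProduct, smul_dotProduct, toR_dot, hrdot ht,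
      smul_eq_mul, div_mul_cancel₀ _ hκne]
  have fB : ∀ t ∈ fiber A u, (∀ i, t i ≠ 0 → P i = 0 ∧ N i ≠ 0) →
      c ⬝ᵥ toR t = c₂ ⬝ᵥ toR t - β := by
    intro t ht hsupp
    have h1 : c ⬝ᵥ toR t = (c₂ - (β / κz) • toR r) ⬝ᵥ toR t := by
      refine Finset.sum_congr rfl fun i _ => ?_
      by_cases hti : t i = 0
      · simp [toR, hti]
      · obtain ⟨hPi, hNi⟩ := hsupp i hti
        simp only [hcdef, hPi, ne_eq, not_true_eq_false, if_neg, if_pos hNi, hbdef,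
          Pi.sub_apply, Pi.smul_apply, smul_eq_mul, toR, not_false_eq_true]
    rw [h1, sub_dotProduct, smul_dotProduct, toR_dot, hrdot ht,
      smul_eq_mul, div_mul_cancel₀ _ hκne]
  -- formula with the big-M part
  have fM : ∀ t : Fin n → ℤ, c ⬝ᵥ toR t =
      d ⬝ᵥ toR t + M * (∑ i, if P i = 0 ∧ N i = 0 then toR t i else 0) := by
    intro t
    have hterm : ∀ i, c i * toR t i =
        d i * toR t i + M * (if P i = 0 ∧ N i = 0 then toR t i else 0) := by
      intro i
      by_cases h1 : P i ≠ 0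
      · simp [hcdef, hddef, h1]
      · by_cases h2 : N i ≠ 0
        · simp [hcdef, hddef, h1, h2]
        · simp only [not_not] at h1 h2
          simp [hcdef, hddef, h1, h2]
    calc c ⬝ᵥ toR t = ∑ i, (d i * toR t i + M * (if P i = 0 ∧ N i = 0 then toR t i else 0)) :=
          Finset.sum_congr rfl fun i _ => hterm i
      _ = d ⬝ᵥ toR t + ∑ i, M * (if P i = 0 ∧ N i = 0 then toR t i else 0) := by
          rw [Finset.sum_add_distrib]
          rfl
      _ = _ := by rw [← Finset.mul_sum]
  have hcP : c ⬝ᵥ toR P = 0 := by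
    rw [fA P hPf (fun i h => h), ← hαdef, sub_self]
  have hcN : c ⬝ᵥ toR N = 0 := by
    rw [fB N hNf (fun i h => ⟨(hPN i).resolve_right h, h⟩), ← hβdef, sub_self]
  -- strict positivity on all other fiber points
  have key : ∀ t ∈ fiber A u, t ≠ P → t ≠ N → 0 < c ⬝ᵥ toR t := by
    intro t ht htP htN
    by_cases hO : ∃ i, P i = 0 ∧ N i = 0 ∧ t i ≠ 0
    · obtain ⟨i0, hp0, hn0, hti⟩ := hO
      have hσnn : ∀ i, (0:ℝ) ≤ (if P i = 0 ∧ N i = 0 then toR t i else 0) := by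
        intro i
        by_cases h : P i = 0 ∧ N i = 0
        · rw [if_pos h]
          simp only [toR]
          exact_mod_cast ht.1 i
        · rw [if_neg h]
      have hσ : (1:ℝ) ≤ ∑ i, if P i = 0 ∧ N i = 0 then toR t i else 0 := by
        have h1 : (1:ℝ) ≤ (if P i0 = 0 ∧ N i0 = 0 then toR t i0 else 0) := by
          rw [if_pos ⟨hp0, hn0⟩]
          have h2 := ht.1 i0
          have h3 : (1:ℤ) ≤ t i0 := by omega
          simp only [toR]
          exact_mod_cast h3
        exact le_trans h1 (Finset.single_le_sum (fun i _ => hσnn i) (Finset.mem_univ i0))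
      rw [fM t]
      nlinarith [hBd t ht, le_max_right (1:ℝ) (1 - B)]
    · push_neg at hO
      by_cases hC1 : sameComponent A u P t
      · have hsupp : ∀ i, t i ≠ 0 → P i ≠ 0 := by
          intro i hti hPi0
          by_cases hNi : N i ≠ 0
          · exact hti (hTsupp hC1 i hNi)
          · exact hti (hO i hPi0 (not_not.mp hNi))
        rw [fA t ht hsupp]
        have := hc₁ (toR t) (subset_convexHull ℝ _ ⟨t, hC1, rfl⟩)
          (fun h => htP (toR_injective h))
        linarith
      · by_cases hC2 : sameComponent A u N t
        · have hsupp : ∀ i, t i ≠ 0 → P i = 0 ∧ N i ≠ 0 := by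
            intro i hti
            have hPi : P i = 0 := by
              by_contra hPi
              exact hti (hSsupp hC2 i hPi)
            refine ⟨hPi, ?_⟩
            intro hNi
            exact hti (hO i hPi hNi)
          rw [fB t ht hsupp]
          have := hc₂ (toR t) (subset_convexHull ℝ _ ⟨t, hC2, rfl⟩)
            (fun h => htN (toR_injective h))
          linarith
        · exfalso
          apply h0f
          have ht0 : t = 0 := by
            funext i
            by_cases hPi : P i ≠ 0
            · exact hOsuppP ht hC1 i hPi
            · by_cases hNi : N i ≠ 0
              · exact hOsuppN ht hC2 i hNi
              · exact hO i (not_not.mp hPi) (not_not.mp hNi)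
          rwa [ht0] at ht
  have hcnn : ∀ t ∈ fiber A u, 0 ≤ c ⬝ᵥ toR t := by
    intro t ht
    by_cases h1 : t = P
    · rw [h1, hcP]
    · by_cases h2 : t = N
      · rw [h2, hcN]
      · exact le_of_lt (key t ht h1 h2)
  refine ⟨c, ?_, ?_⟩
  · rintro v ⟨x, y, hx, hy, hxy, rfl⟩
    simp [dotProduct_add, dotProduct_smul, hcP, hcN]
  · intro v hv hvs
    rw [convexHull_eq] at hv
    obtain ⟨ι, s, w, z, hw0, hw1, hz, rfl⟩ := hv
    have hdotsum : ∀ (sc : Finset ι), c ⬝ᵥ (∑ i ∈ sc, w i • z i) = ∑ i ∈ sc, w i * (c ⬝ᵥ z i) := by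
      intro sc
      simp only [dotProduct, Finset.sum_apply, Pi.smul_apply, smul_eq_mul, Finset.mul_sum]
      rw [Finset.sum_comm]
      refine Finset.sum_congr rfl fun i _ => ?_
      refine Finset.sum_congr rfl fun j _ => ?_
      ring
    have hsum : c ⬝ᵥ s.centerMass w z = ∑ i ∈ s, w i * (c ⬝ᵥ z i) := by
      rw [Finset.centerMass_eq_of_sum_1 _ _ hw1, hdotsum]
    have hterm : ∀ i ∈ s, 0 ≤ w i * (c ⬝ᵥ z i) := by
      intro i hi
      obtain ⟨t, ht, hteq⟩ := hz i hi
      exact mul_nonneg (hw0 i hi) (hteq ▸ hcnn t ht)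
    by_contra hnpos
    have h0 : ∑ i ∈ s, w i * (c ⬝ᵥ z i) = 0 := by
      refine le_antisymm ?_ (Finset.sum_nonneg hterm)
      rw [← hsum]
      linarith [not_lt.mp hnpos]
    have hall := (Finset.sum_eq_zero_iff_of_nonneg hterm).mp h0
    apply hvs
    rw [← convexHull_pair]
    rw [← Finset.centerMass_filter_ne_zero (w := w)]
    refine Finset.centerMass_mem_convexHull _ ?_ ?_ ?_
    · intro i hi
      exact hw0 i (Finset.mem_filter.mp hi).1
    · rw [Finset.sum_filter_ne_zero, hw1]
      exact one_pos
    · intro i hi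
      obtain ⟨his, hwi⟩ := Finset.mem_filter.mp hi
      have hzi : c ⬝ᵥ z i = 0 := by
        have := hall i his
        rcases mul_eq_zero.mp this with h | h
        · exact absurd h hwi
        · exact h
      obtain ⟨t, ht, hteq⟩ := hz i his
      by_cases h1 : t = P
      · left; rw [← hteq, h1]
      · by_cases h2 : t = N
        · right
          rw [← hteq, h2]
          exact rfl
        · exact absurd hzi (ne_of_gt (hteq ▸ key t ht h1 h2))
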